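/- Let G = (V,E) be a finite simple graph that is K_{r+1}-free (r ≥ 1), and assign to each vertex v a nonnegative real number x_v with ∑_{v∈V} x_v = 1. Then ∑_{uv∈E} x_u·x_v ≤ (1/2)·(1 - 1/r). -/

import Mathlib

open Finset
set_option linter.unusedSectionVars false
namespace MS
variable {V : Type*} [Fintype V] [DecidableEq V] (G : SimpleGraph V) [DecidableRel G.Adj]
def e (w z : V) : ℝ := if G.Adj w z then 1 else 0
def S (x : V → ℝ) (w : V) : ℝ := ∑ z, e G w z * x z
def B (x : V → ℝ) : ℝ := ∑ w, ∑ z, e G w z * x w * x z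
variable {G}
lemma e_symm (w z : V) : e G w z = e G z w := by simp [e, SimpleGraph.adj_comm]
lemma e_self (w : V) : e G w w = 0 := by simp [e]
lemma e_nonneg (w z : V) : 0 ≤ e G w z := by unfold e; split <;> norm_num
lemma e_le_one (w z : V) : e G w z ≤ 1 := by unfold e; split <;> norm_num
lemma S_eq (x : V → ℝ) (u : V) : S G x u = ∑ w, e G w u * x w := by
  unfold S; exact Finset.sum_congr rfl fun w _ => by rw [e_symm]
lemma B_eq (x : V → ℝ) : B G x = ∑ w, x w * S G x w := by
  unfold B S
  refine Finset.sum_congr rfl fun w _ => ?_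
  rw [Finset.mul_sum]
  exact Finset.sum_congr rfl fun z _ => by ring

lemma B_shift (x : V → ℝ) (u v : V) (huv : u ≠ v) (hadj : ¬ G.Adj u v) (t : ℝ) :
    B G (fun w => x w + t * ((if w = u then 1 else 0) - (if w = v then 1 else 0)))
      = B G x + 2 * t * (S G x u - S G x v) := by
  set d : V → ℝ := fun w => (if w = u then (1:ℝ) else 0) - (if w = v then 1 else 0) with hd
  have heuv : e G u v = 0 := by simp [e, hadj]
  have hevu : e G v u = 0 := by rw [e_symm]; exact heuv
  -- inner sum against d collapses
  have hinner : ∀ w, ∑ z, e G w z * d z = e G w u - e G w v := by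
    intro w
    simp only [hd, mul_sub, Finset.sum_sub_distrib, mul_ite, mul_one, mul_zero,
      Finset.sum_ite_eq', Finset.mem_univ, if_true]
  have houter : ∀ f : V → ℝ, ∑ w, d w * f w = f u - f v := by
    intro f
    simp only [hd, sub_mul, Finset.sum_sub_distrib, ite_mul, one_mul, zero_mul,
      Finset.sum_ite_eq', Finset.mem_univ, if_true]
  have step1 : B G (fun w => x w + t * d w)
      = ∑ w, (x w + t * d w) * (S G x w + t * (e G w u - e G w v)) := by
    unfold B
    refine Finset.sum_congr rfl fun w _ => ?_
    have : ∑ z, e G w z * (x w + t * d w) * (x z + t * d z)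
        = (x w + t * d w) * ∑ z, e G w z * (x z + t * d z) := by
      rw [Finset.mul_sum]; exact Finset.sum_congr rfl fun z _ => by ring
    rw [this]
    congr 1
    have : ∑ z, e G w z * (x z + t * d z) = (∑ z, e G w z * x z) + t * ∑ z, e G w z * d z := by
      rw [Finset.mul_sum, ← Finset.sum_add_distrib]
      exact Finset.sum_congr rfl fun z _ => by ring
    rw [this, hinner w]; rfl
  rw [step1]
  have expand : ∀ w, (x w + t * d w) * (S G x w + t * (e G w u - e G w v))
      = x w * S G x w + t * (x w * (e G w u - e G w v)) + t * (d w * S G x w)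
        + t * t * (d w * (e G w u - e G w v)) := fun w => by ring
  simp only [expand]
  rw [Finset.sum_add_distrib, Finset.sum_add_distrib, Finset.sum_add_distrib,
    ← Finset.mul_sum, ← Finset.mul_sum, ← Finset.mul_sum]
  have h1 : ∑ w, x w * (e G w u - e G w v) = S G x u - S G x v := by
    simp only [mul_sub, Finset.sum_sub_distrib]
    rw [S_eq, S_eq]
    congr 1 <;> exact Finset.sum_congr rfl fun w _ => by ring
  have h2 : ∑ w, d w * S G x w = S G x u - S G x v := houter _
  have h3 : ∑ w, d w * (e G w u - e G w v) = 0 := by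
    rw [houter]
    rw [e_self, heuv, e_self, hevu]; ring
  rw [h1, h2, h3, ← B_eq]
  ring


lemma B_eq_twice_edgeSum (x : V → ℝ) :
    B G x = 2 * ∑ e ∈ G.edgeFinset,
      Sym2.lift ⟨fun u v => x u * x v, fun _ _ => mul_comm _ _⟩ e := by
  have hdart : ∑ d : G.Dart, x d.toProd.1 * x d.toProd.2 = B G x := by
    unfold B
    have : ∑ w, ∑ z, e G w z * x w * x z
        = ∑ p ∈ (univ ×ˢ univ).filter (fun p : V × V => G.Adj p.1 p.2), x p.1 * x p.2 := by
      rw [Finset.sum_filter, Finset.sum_product]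
      refine Finset.sum_congr rfl fun w _ => Finset.sum_congr rfl fun z _ => ?_
      unfold e; split <;> simp
    rw [this]
    refine Finset.sum_bij' (fun (d : G.Dart) _ => d.toProd)
      (fun p hp => SimpleGraph.Dart.mk p (Finset.mem_filter.1 hp).2) ?_ ?_ ?_ ?_ ?_
    · intro d _; simp [Finset.mem_filter, d.adj]
    · intro p hp; simp
    · intro d _; rfl
    · intro p hp; rfl
    · intro d _; rfl
  rw [← hdart]
  rw [← Finset.sum_fiberwise_of_maps_to (g := SimpleGraph.Dart.edge)
    (t := G.edgeFinset) (fun d _ => by simp [SimpleGraph.Dart.edge_mem])]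
  rw [Finset.mul_sum]
  refine Finset.sum_congr rfl fun ε hε => ?_
  have hcard : #({d : G.Dart | d.edge = ε} : Finset _) = 2 :=
    G.dart_edge_fiber_card ε (SimpleGraph.mem_edgeFinset.1 hε)
  have : ∀ d ∈ ({d : G.Dart | d.edge = ε} : Finset _),
      x d.toProd.1 * x d.toProd.2
        = Sym2.lift ⟨fun u v => x u * x v, fun _ _ => mul_comm _ _⟩ ε := by
    intro d hd
    have hde : d.edge = ε := by simpa using hd
    rw [← hde]
    rfl
  calc ∑ d ∈ ({d : G.Dart | d.edge = ε} : Finset _), x d.toProd.1 * x d.toProd.2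
      = ∑ _d ∈ ({d : G.Dart | d.edge = ε} : Finset _),
        Sym2.lift ⟨fun u v => x u * x v, fun _ _ => mul_comm _ _⟩ ε := Finset.sum_congr rfl this
    _ = 2 * Sym2.lift ⟨fun u v => x u * x v, fun _ _ => mul_comm _ _⟩ ε := by
        rw [Finset.sum_const, hcard]; simp

lemma main_ind (r : ℕ) (hr : 1 ≤ r) (hfree : G.CliqueFree (r + 1)) :
    ∀ n : ℕ, ∀ x : V → ℝ, (∀ v, 0 ≤ x v) → ∑ v, x v = 1 →
      #(univ.filter fun v => x v ≠ 0) ≤ n → B G x ≤ 1 - 1 / (r : ℝ) := by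
  intro n
  induction n with
  | zero =>
    intro x hx hsum hcard
    exfalso
    have hemp : (univ.filter fun v => x v ≠ 0) = ∅ :=
      Finset.card_eq_zero.1 (Nat.le_zero.1 hcard)
    have hall : ∀ v, x v = 0 := by
      intro v
      by_contra h
      have : v ∈ (univ.filter fun v => x v ≠ 0) :=
        Finset.mem_filter.2 ⟨Finset.mem_univ v, h⟩
      rw [hemp] at this
      exact absurd this (Finset.notMem_empty v)
    rw [Finset.sum_congr rfl fun v _ => hall v] at hsum
    simp at hsum
  | succ n ih =>
    intro x hx hsum hcard
    set K := univ.filter fun v => x v ≠ 0 with hK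
    by_cases hcl : ∀ a ∈ K, ∀ b ∈ K, a ≠ b → G.Adj a b
    · -- clique case
      have hKclique : G.IsClique ↑K := fun a ha b hb hab =>
        hcl a (Finset.mem_coe.1 ha) b (Finset.mem_coe.1 hb) hab
      have hKcard : #K ≤ r := by
        by_contra h
        push_neg at h
        obtain ⟨K', hK'sub, hK'card⟩ := Finset.exists_subset_card_eq h
        exact hfree K' ⟨hKclique.subset (Finset.coe_subset.2 hK'sub), hK'card⟩
      have hKsum : ∑ w ∈ K, x w = 1 := by
        rw [← hsum]
        refine Finset.sum_subset (Finset.subset_univ _) ?_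
        intro w _ hw
        have : ¬ x w ≠ 0 := fun h => hw (Finset.mem_filter.2 ⟨Finset.mem_univ w, h⟩)
        simpa using this
      have hKpos : 0 < #K := by
        rcases Finset.eq_empty_or_nonempty K with h | h
        · exfalso; rw [h] at hKsum; simp at hKsum
        · exact Finset.card_pos.2 h
      have hSle : ∀ w, S G x w ≤ 1 - x w := by
        intro w
        have : S G x w ≤ ∑ z, (if z = w then 0 else x z) := by
          refine Finset.sum_le_sum fun z _ => ?_
          by_cases hzw : z = w
          · subst hzw; rw [e_self]; simp
          · simp only [hzw, if_neg, if_false]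
            calc e G w z * x z ≤ 1 * x z :=
                mul_le_mul_of_nonneg_right (e_le_one w z) (hx z)
              _ = x z := one_mul _
        refine this.trans ?_
        have : ∑ z, (if z = w then (0:ℝ) else x z) = (∑ z, x z) - x w := by
          have : ∀ z, (if z = w then (0:ℝ) else x z) = x z - (if z = w then x z else 0) := by
            intro z; by_cases h : z = w <;> simp [h]
          simp only [this, Finset.sum_sub_distrib, Finset.sum_ite_eq', Finset.mem_univ, if_true]
        rw [this, hsum]
      have hB : B G x ≤ 1 - ∑ w, x w ^ 2 := by
        rw [B_eq]
        calc ∑ w, x w * S G x w ≤ ∑ w, x w * (1 - x w) :=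
            Finset.sum_le_sum fun w _ => mul_le_mul_of_nonneg_left (hSle w) (hx w)
          _ = (∑ w, x w) - ∑ w, x w ^ 2 := by
              rw [← Finset.sum_sub_distrib]
              exact Finset.sum_congr rfl fun w _ => by ring
          _ = 1 - ∑ w, x w ^ 2 := by rw [hsum]
      have hsq : 1 / (#K : ℝ) ≤ ∑ w, x w ^ 2 := by
        have hcs := sq_sum_le_card_mul_sum_sq (s := K) (f := x)
        rw [hKsum] at hcs
        have hKR : (0:ℝ) < (#K : ℝ) := by exact_mod_cast hKpos
        have h1 : 1 / (#K : ℝ) ≤ ∑ w ∈ K, x w ^ 2 := by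
          rw [div_le_iff₀ hKR] at *
          nlinarith
        refine h1.trans ?_
        exact Finset.sum_le_sum_of_subset_of_nonneg (Finset.subset_univ _)
          (fun w _ _ => sq_nonneg _)
      have hrK : 1 / (r : ℝ) ≤ 1 / (#K : ℝ) := by
        apply one_div_le_one_div_of_le
        · exact_mod_cast hKpos
        · exact_mod_cast hKcard
      linarith
    · -- non-clique case
      push_neg at hcl
      obtain ⟨a, ha, b, hb, hab, hnadj⟩ := hcl
      have key : ∀ u v, u ∈ K → v ∈ K → u ≠ v → ¬ G.Adj u v →
          S G x v ≤ S G x u → B G x ≤ 1 - 1 / (r : ℝ) := by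
        intro u v hu hv huv hadj hS
        set t := x v with ht
        set y : V → ℝ := fun w =>
          x w + t * ((if w = u then 1 else 0) - (if w = v then 1 else 0)) with hy
        have hxv : 0 < x v := by
          have : x v ≠ 0 := (Finset.mem_filter.1 hv).2
          exact lt_of_le_of_ne (hx v) (Ne.symm this)
        have hyv : y v = 0 := by
          simp only [hy]
          rw [if_neg (Ne.symm huv)]
          simp [ht]
        have hynn : ∀ w, 0 ≤ y w := by
          intro w
          by_cases hwv : w = v
          · subst hwv; rw [hyv]
          · by_cases hwu : w = u
            · subst hwu
              have htnn : 0 ≤ t := ht ▸ hx v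
              have hxw := hx w
              simp [hy, huv]
              linarith
            · simp only [hy, if_neg hwu, if_neg hwv]
              simpa using hx w
        have hysum : ∑ w, y w = 1 := by
          simp only [hy]
          rw [Finset.sum_add_distrib, hsum, ← Finset.mul_sum]
          simp only [Finset.sum_sub_distrib, Finset.sum_ite_eq', Finset.mem_univ, if_true]
          ring
        have hysupp : (univ.filter fun w => y w ≠ 0) ⊆ K.erase v := by
          intro w hw
          have hwne : y w ≠ 0 := (Finset.mem_filter.1 hw).2
          have hwv : w ≠ v := fun h => hwne (h ▸ hyv)
          refine Finset.mem_erase.2 ⟨hwv, ?_⟩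
          by_cases hwu : w = u
          · subst hwu; exact hu
          · refine Finset.mem_filter.2 ⟨Finset.mem_univ _, ?_⟩
            intro hxw
            apply hwne
            simp only [hy, if_neg hwu, if_neg hwv, hxw]
            ring
        have hycard : #(univ.filter fun w => y w ≠ 0) ≤ n := by
          have h1 := Finset.card_le_card hysupp
          have h2 : #(K.erase v) = #K - 1 := Finset.card_erase_of_mem hv
          have h3 : 1 ≤ #K := Finset.card_pos.2 ⟨v, hv⟩
          omega
        have hBy : B G y = B G x + 2 * t * (S G x u - S G x v) :=
          B_shift x u v huv hadj t
        have : B G x ≤ B G y := by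
          rw [hBy]
          nlinarith [hxv.le, hS]
        exact this.trans (ih y hynn hysum hycard)
      rcases le_total (S G x b) (S G x a) with h | h
      · exact key a b ha hb hab hnadj h
      · exact key b a hb ha hab.symm (fun h' => hnadj h'.symm) h

end MS


/-- **Motzkin–Straus theorem.** If `G` is a `K_{r+1}`-free finite simple graph (`r ≥ 1`) and
`x` assigns nonnegative reals to the vertices with total sum `1`, then the sum of `x u * x v`
over the (unordered) edges `uv` of `G` is at most `(1/2) * (1 - 1/r)`. -/
theorem stmt_1 {V : Type*} [Fintype V] (G : SimpleGraph V) [DecidableRel G.Adj]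
    (r : ℕ) (hr : 1 ≤ r) (hfree : G.CliqueFree (r + 1))
    (x : V → ℝ) (hx : ∀ v, 0 ≤ x v) (hsum : ∑ v, x v = 1) :
    ∑ e ∈ G.edgeFinset, Sym2.lift ⟨fun u v => x u * x v, fun _ _ => mul_comm _ _⟩ e
      ≤ (1 / 2) * (1 - 1 / (r : ℝ)) := by
  classical
  have h := MS.main_ind r hr hfree (#(Finset.univ.filter fun v => x v ≠ 0)) x hx hsum le_rfl
  have h2 := MS.B_eq_twice_edgeSum (G := G) x
  linarith
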